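/- In the polynomial ring F_2[y_1, y_2, y_3], the subalgebra generated by the four elements y_1, y_2^2, y_3^4, and y_2^3 + y_1·y_3^2 is isomorphic as an F_2-algebra to F_2[a, b, c, d]/(d^2 + b^3 + a^2·c), via a ↦ y_1, b ↦ y_2^2, c ↦ y_3^4, d ↦ y_2^3 + y_1·y_3^2. Equivalently, the kernel of the F_2-algebra map F_2[a,b,c,d] → F_2[y_1,y_2,y_3] determined by these assignments is the principal ideal generated by d^2 + b^3 + a^2c. -/

import Mathlib

open MvPolynomial

noncomputable section KPM

private abbrev S2 := MvPolynomial (Fin 3) (ZMod 2)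

private def mapD (f : (Fin 3 →₀ ℕ) → (Fin 3 →₀ ℕ)) (q : S2) : S2 := AddMonoidAlgebra.mapDomain f q

private lemma mapD_add (f) (p q : S2) : mapD f (p + q) = mapD f p + mapD f q :=
  AddMonoidAlgebra.mapDomain_add f p q

private lemma mapD_monomial (f) (μ : Fin 3 →₀ ℕ) (c : ZMod 2) :
    mapD f (monomial μ c) = monomial (f μ) c := by
  rw [mapD, ← single_eq_monomial, AddMonoidAlgebra.mapDomain_single, single_eq_monomial]

private lemma coeff_mapD_apply {f : (Fin 3 →₀ ℕ) → (Fin 3 →₀ ℕ)} (hf : Function.Injective f)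
    (q : S2) (μ : Fin 3 →₀ ℕ) : coeff (f μ) (mapD f q) = coeff μ q :=
  Finsupp.mapDomain_apply hf (AddMonoidAlgebra.coeff q) μ

private lemma coeff_mapD_notin {f : (Fin 3 →₀ ℕ) → (Fin 3 →₀ ℕ)} {m : Fin 3 →₀ ℕ}
    (h : m ∉ Set.range f) (q : S2) : coeff m (mapD f q) = 0 :=
  Finsupp.mapDomain_notin_range (AddMonoidAlgebra.coeff q) m h

private lemma mapD_inj {f : (Fin 3 →₀ ℕ) → (Fin 3 →₀ ℕ)} (hf : Function.Injective f) :
    Function.Injective (mapD f) := fun _ _ h => AddMonoidAlgebra.mapDomain_injective hf h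

private def uu : Fin 3 → S2 := ![X 1 ^ 2, X 2 ^ 4, X 0]

private def tau (μ : Fin 3 →₀ ℕ) : Fin 3 →₀ ℕ :=
  Finsupp.equivFunOnFinite.symm ![μ 2, 2 * μ 0, 4 * μ 1]

private lemma tau_apply (μ : Fin 3 →₀ ℕ) (j : Fin 3) :
    tau μ j = ![μ 2, 2 * μ 0, 4 * μ 1] j := rfl

private lemma tau_inj : Function.Injective tau := by
  intro μ μ' h
  have h0 := congrArg (fun g => g 0) h
  have h1 := congrArg (fun g => g 1) h
  have h2 := congrArg (fun g => g 2) h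
  simp [tau_apply] at h0 h1 h2
  ext j
  fin_cases j <;> simp <;> omega

private lemma aeval_uu (q : S2) : aeval uu q = mapD tau q := by
  induction q using MvPolynomial.induction_on' with
  | add p q hp hq => rw [map_add, hp, hq, mapD_add]
  | monomial μ c =>
      rw [mapD_monomial, aeval_monomial, monomial_eq]
      rw [Finsupp.prod_fintype _ _ (fun i => pow_zero _),
        Finsupp.prod_fintype _ _ (fun i => pow_zero _)]
      simp only [Fin.prod_univ_three, uu, tau_apply]
      simp only [Matrix.cons_val_zero, Matrix.cons_val_one, Matrix.head_cons,
        Matrix.cons_val_two, Matrix.tail_cons, ← pow_mul, algebraMap_eq]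
      ring

private lemma shift_mapD (s : Fin 3 →₀ ℕ) (σf : (Fin 3 →₀ ℕ) → (Fin 3 →₀ ℕ)) (q : S2) :
    (monomial s (1 : ZMod 2)) * mapD σf q = mapD (fun μ => s + σf μ) q := by
  induction q using MvPolynomial.induction_on' with
  | add p q hp hq => rw [mapD_add, mul_add, hp, hq, mapD_add]
  | monomial μ c => rw [mapD_monomial, mapD_monomial, monomial_mul, one_mul]

end KPM

noncomputable section KPM2
open Finsupp in
private lemma inj_key (r0 r1 : S2)
    (h : aeval uu r0 + (X 1 ^ 3 + X 0 * X 2 ^ 2) * aeval uu r1 = 0) :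
    r0 = 0 ∧ r1 = 0 := by
  have hX13 : (X 1 ^ 3 : S2) = monomial (single 1 3) 1 := by
    rw [X_pow_eq_monomial]
  have hX02 : (X 0 * X 2 ^ 2 : S2) = monomial (single 0 1 + single 2 2) 1 := by
    rw [X_pow_eq_monomial, X, monomial_mul, one_mul]
  have h' : mapD tau r0 + (mapD (fun μ => single 1 3 + tau μ) r1
      + mapD (fun μ => (single 0 1 + single 2 2) + tau μ) r1) = 0 := by
    rw [← shift_mapD, ← shift_mapD, ← aeval_uu, ← aeval_uu, ← hX13, ← hX02, ← add_mul]
    exact h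
  have tau1_inj : Function.Injective (fun μ => single (1 : Fin 3) 3 + tau μ) :=
    fun a b e => tau_inj (by simpa using e)
  have notin0 : ∀ μ : Fin 3 →₀ ℕ, single (1:Fin 3) 3 + tau μ ∉ Set.range tau := by
    rintro μ ⟨μ', e⟩
    have := congrArg (fun g : Fin 3 →₀ ℕ => g 1) e
    simp [Finsupp.add_apply, Finsupp.single_apply, tau_apply] at this
    omega
  have notin2 : ∀ μ : Fin 3 →₀ ℕ, single (1:Fin 3) 3 + tau μ ∉
      Set.range (fun μ => (single (0:Fin 3) 1 + single (2:Fin 3) 2) + tau μ) := by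
    rintro μ ⟨μ', e⟩
    have := congrArg (fun g : Fin 3 →₀ ℕ => g 1) e
    simp [Finsupp.add_apply, Finsupp.single_apply, tau_apply] at this
    omega
  have hr1 : r1 = 0 := by
    refine MvPolynomial.ext _ _ fun μ => ?_
    have hc := congrArg (coeff (single 1 3 + tau μ)) h'
    rw [coeff_add, coeff_add, coeff_zero] at hc
    rw [coeff_mapD_apply tau1_inj] at hc
    rw [coeff_mapD_notin (notin0 μ)] at hc
    rw [coeff_mapD_notin (notin2 μ)] at hc
    simpa using hc
  subst hr1
  refine ⟨?_, rfl⟩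
  have hz : ∀ f, mapD f (0 : S2) = 0 := fun f => AddMonoidAlgebra.mapDomain_zero f
  rw [hz, hz, add_zero, add_zero] at h'
  exact mapD_inj tau_inj (h'.trans (hz tau).symm)

end KPM2

noncomputable section KPM3

private def ee : MvPolynomial (Fin 4) (ZMod 2) ≃ₐ[ZMod 2] Polynomial S2 :=
  (renameEquiv (ZMod 2) (Equiv.swap (0 : Fin 4) 3)).trans (MvPolynomial.finSuccEquiv (ZMod 2) 3)

private def dd : S2 := X 1 ^ 3 + X 0 * X 2 ^ 2

private def FF : Polynomial S2 →+* S2 := Polynomial.eval₂RingHom ((aeval uu).toRingHom) dd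

private lemma ee_X0 : ee (X 0) = Polynomial.C (X 2) := by
  have hs : Equiv.swap (0 : Fin 4) 3 0 = (2 : Fin 3).succ := by decide
  rw [ee, AlgEquiv.trans_apply, renameEquiv_apply, rename_X, hs, finSuccEquiv_X_succ]

private lemma ee_X1 : ee (X 1) = Polynomial.C (X 0) := by
  have hs : Equiv.swap (0 : Fin 4) 3 1 = (0 : Fin 3).succ := by decide
  rw [ee, AlgEquiv.trans_apply, renameEquiv_apply, rename_X, hs, finSuccEquiv_X_succ]

private lemma ee_X2 : ee (X 2) = Polynomial.C (X 1) := by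
  have hs : Equiv.swap (0 : Fin 4) 3 2 = (1 : Fin 3).succ := by decide
  rw [ee, AlgEquiv.trans_apply, renameEquiv_apply, rename_X, hs, finSuccEquiv_X_succ]

private lemma ee_X3 : ee (X 3) = Polynomial.X := by
  have hs : Equiv.swap (0 : Fin 4) 3 3 = 0 := by decide
  rw [ee, AlgEquiv.trans_apply, renameEquiv_apply, rename_X, hs, finSuccEquiv_X_zero]

end KPM3

noncomputable section KPM4

private def vv : Fin 4 → S2 := ![X 0, X 1 ^ 2, X 2 ^ 4, X 1 ^ 3 + X 0 * X 2 ^ 2]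

private def mm : Polynomial S2 := Polynomial.X ^ 2 + Polynomial.C (X 0 ^ 3 + X 2 ^ 2 * X 1)

private lemma ee_rel :
    ee ((X 3 : MvPolynomial (Fin 4) (ZMod 2)) ^ 2 + X 1 ^ 3 + X 0 ^ 2 * X 2) = mm := by
  rw [map_add, map_add, map_mul, map_pow, map_pow, map_pow, ee_X0, ee_X1, ee_X2, ee_X3, mm,
    ← Polynomial.C_pow, ← Polynomial.C_pow, ← Polynomial.C_mul, add_assoc,
    ← Polynomial.C_add]

private lemma mm_monic : mm.Monic :=
  Polynomial.monic_X_pow_add (lt_of_le_of_lt Polynomial.degree_C_le (by norm_num))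

private lemma mm_degree : mm.degree = 2 :=
  Polynomial.degree_X_pow_add_C (by norm_num) _

private lemma hcomm (q : MvPolynomial (Fin 4) (ZMod 2)) : aeval vv q = FF (ee q) := by
  induction q using MvPolynomial.induction_on with
  | C r =>
      have h1 : ee (C r) = Polynomial.C (C r) := by
        simp [ee, renameEquiv_apply, rename_C, finSuccEquiv_apply, eval₂_C]
      rw [h1, FF]
      simp [Polynomial.eval₂_C, aeval_C, algebraMap_eq]
  | add p q hp hq => rw [map_add, map_add, map_add, hp, hq]
  | mul_X p n hp =>
      rw [map_mul, map_mul, map_mul, hp]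
      congr 1
      fin_cases n
      · show (aeval vv) (X (0 : Fin 4)) = FF (ee (X (0 : Fin 4)))
        rw [ee_X0]
        simp [FF, vv, uu, Polynomial.eval₂_C]
      · show (aeval vv) (X (1 : Fin 4)) = FF (ee (X (1 : Fin 4)))
        rw [ee_X1]
        simp [FF, vv, uu, Polynomial.eval₂_C]
      · show (aeval vv) (X (2 : Fin 4)) = FF (ee (X (2 : Fin 4)))
        rw [ee_X2]
        simp [FF, vv, uu, Polynomial.eval₂_C]
      · show (aeval vv) (X (3 : Fin 4)) = FF (ee (X (3 : Fin 4)))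
        rw [ee_X3]
        simp [FF, vv, dd, uu, Polynomial.eval₂_X]

private lemma hrel0 :
    aeval vv ((X 3 : MvPolynomial (Fin 4) (ZMod 2)) ^ 2 + X 1 ^ 3 + X 0 ^ 2 * X 2) = 0 := by
  have h2 : (2 : S2) = 0 := by
    have : ((2 : ℕ) : S2) = 0 := CharP.cast_eq_zero S2 2
    exact_mod_cast this
  rw [map_add, map_add, map_mul, map_pow, map_pow, map_pow, aeval_X, aeval_X, aeval_X, aeval_X]
  rw [show vv 3 = X 1 ^ 3 + X 0 * X 2 ^ 2 from rfl, show vv 1 = X 1 ^ 2 from rfl,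
    show vv 0 = X 0 from rfl, show vv 2 = X 2 ^ 4 from rfl]
  linear_combination (X 1 ^ 6 + X 1 ^ 3 * X 0 * X 2 ^ 2 + X 0 ^ 2 * X 2 ^ 4 : S2) * h2

end KPM4

/-- The kernel of the `𝔽₂`-algebra map `𝔽₂[a,b,c,d] → 𝔽₂[y₁,y₂,y₃]` determined by
`a ↦ y₁`, `b ↦ y₂²`, `c ↦ y₃⁴`, `d ↦ y₂³ + y₁·y₃²` is the principal ideal generated
by `d² + b³ + a²c`.  Equivalently, the subalgebra of `𝔽₂[y₁,y₂,y₃]` generated by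
these four elements is isomorphic to `𝔽₂[a,b,c,d]/(d² + b³ + a²c)`. -/
theorem kernel_of_primitives_map :
    RingHom.ker (MvPolynomial.aeval
        (![X 0, X 1 ^ 2, X 2 ^ 4, X 1 ^ 3 + X 0 * X 2 ^ 2] :
          Fin 4 → MvPolynomial (Fin 3) (ZMod 2)) :
        MvPolynomial (Fin 4) (ZMod 2) →ₐ[ZMod 2] MvPolynomial (Fin 3) (ZMod 2))
      = Ideal.span {(X 3 : MvPolynomial (Fin 4) (ZMod 2)) ^ 2 + X 1 ^ 3 + X 0 ^ 2 * X 2} := by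
  have hvv : (![X 0, X 1 ^ 2, X 2 ^ 4, X 1 ^ 3 + X 0 * X 2 ^ 2] :
      Fin 4 → MvPolynomial (Fin 3) (ZMod 2)) = vv := rfl
  rw [hvv]
  apply le_antisymm
  · intro p hp
    have hp' : aeval vv p = 0 := hp
    have hsplit := Polynomial.modByMonic_add_div (ee p) mm
    have hFrel : FF mm = 0 := by rw [← ee_rel, ← hcomm]; exact hrel0
    have hFR : FF (ee p %ₘ mm) = 0 := by
      have hc := congrArg FF hsplit
      rw [map_add, map_mul, hFrel, zero_mul, add_zero] at hc
      rw [hc, ← hcomm, hp']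
    have hdeg : (ee p %ₘ mm).degree ≤ 1 := by
      have hlt : (ee p %ₘ mm).degree < 2 := by
        have := Polynomial.degree_modByMonic_lt (ee p) mm_monic
        rwa [mm_degree] at this
      rcases hD : (ee p %ₘ mm).degree with _ | n
      · exact bot_le
      · rw [hD] at hlt
        have hlt' : (n : WithBot ℕ) < 2 := hlt
        have hn : n ≤ 1 := Nat.lt_succ_iff.mp (by exact_mod_cast hlt')
        show (n : WithBot ℕ) ≤ 1
        exact_mod_cast hn
    have hR := Polynomial.eq_X_add_C_of_degree_le_one hdeg
    have hFFexp : FF (ee p %ₘ mm) = aeval uu ((ee p %ₘ mm).coeff 0)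
        + (X 1 ^ 3 + X 0 * X 2 ^ 2) * aeval uu ((ee p %ₘ mm).coeff 1) := by
      conv_lhs => rw [hR]
      rw [FF, Polynomial.coe_eval₂RingHom, Polynomial.eval₂_add, Polynomial.eval₂_mul,
        Polynomial.eval₂_C, Polynomial.eval₂_C, Polynomial.eval₂_X]
      show aeval uu _ * dd + aeval uu _ = _
      rw [dd]; ring
    obtain ⟨h0, h1⟩ := inj_key _ _ (hFFexp ▸ hFR)
    have hR0 : ee p %ₘ mm = 0 := by rw [hR, h0, h1]; simp
    have hPfact : ee p = mm * (ee p /ₘ mm) := by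
      conv_lhs => rw [← hsplit]
      rw [hR0, zero_add]
    have hfinal : p = ((X 3 : MvPolynomial (Fin 4) (ZMod 2)) ^ 2 + X 1 ^ 3 + X 0 ^ 2 * X 2)
        * ee.symm (ee p /ₘ mm) := by
      apply ee.injective
      rw [map_mul, AlgEquiv.apply_symm_apply, ee_rel]
      exact hPfact
    rw [hfinal]
    exact Ideal.mem_span_singleton.mpr (Dvd.intro _ rfl)
  · rw [Ideal.span_le, Set.singleton_subset_iff]
    exact hrel0
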